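/- Characterization of the cohesive proportional sharing operator (Corollary B.1(2)): Let Φ be an operator assigning to each f ∈ F_+ a solution Φ(f) : V_+ → ℝ^N such that Σ_{i∈N} Φ_i(f)(v) = v* for every v ∈ V_+ (cohesive efficiency), where v* = max_{P} Σ_{T∈P} v(T) over all partitions P of N. Then Φ satisfies (ET) and (EES) and, for every f ∈ F_+, Φ(f) satisfies (f-IECoR), if and only if for every f ∈ F_+, every v ∈ V_+ and every i ∈ N, Φ_i(f)(v) = (f_i(v)/Σ_{k∈N} f_k(v))·v*. -/

import Mathlib

/-!
Corollary B.1(2): characterization of the cohesive proportional sharing operator.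
-/

namespace Stmt8

/-- A TU-game on the player set `N`: a function on coalitions vanishing at `∅`. -/
abbrev Game (N : Type*) := {v : Finset N → ℝ // v ∅ = 0}

variable (N : Type*) [Fintype N] [DecidableEq N]

/-- `V₊`: TU-games whose sum of individual worths is strictly positive. -/
abbrev GamePos := {v : Game N // 0 < ∑ k, v.1 {k}}

/-- `F₊`: positive solutions, i.e. maps on `V₊` whose payoffs always have a
strictly positive sum. -/
abbrev SolPos := {f : GamePos N → N → ℝ // ∀ v, 0 < ∑ k, f v k}

variable {N}

/-- `P` is a partition of the player set `S`. -/
def IsPartition (S : Finset N) (P : Finset (Finset N)) : Prop :=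
  (∀ C ∈ P, C.Nonempty) ∧
  (∀ C ∈ P, ∀ C' ∈ P, C ≠ C' → Disjoint C C') ∧
  P.biUnion id = S

/-- The trivial coalition structure `{N}` is a partition of `N`. -/
theorem isPartition_singleton [Nonempty N] :
    IsPartition (Finset.univ : Finset N) ({Finset.univ} : Finset (Finset N)) := by
  refine ⟨?_, ?_, ?_⟩
  · intro C hC
    rw [Finset.mem_singleton] at hC
    subst hC
    exact Finset.univ_nonempty
  · intro C hC C' hC' hne
    rw [Finset.mem_singleton] at hC hC'
    subst hC; subst hC'
    exact absurd rfl hne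
  · rw [Finset.singleton_biUnion]; rfl

/-- The cohesive worth `v* = max_{P} Σ_{T ∈ P} v(T)`, the maximum over all
partitions `P` of `N` of the total worth of the blocks. -/
noncomputable def cohesiveWorth [Nonempty N] (v : Game N) : ℝ :=
  letI : DecidablePred (IsPartition (Finset.univ : Finset N)) := Classical.decPred _
  ((Finset.univ : Finset (Finset (Finset N))).filter
      (IsPartition (Finset.univ : Finset N))).sup'
    ⟨{Finset.univ}, by
      simp only [Finset.mem_filter, Finset.mem_univ, true_and]
      exact isPartition_singleton⟩
    (fun P => ∑ T ∈ P, v.1 T)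

/-- Equal treatment (ET) for an operator on `F₊`. -/
def ET (Φ : SolPos N → GamePos N → N → ℝ) : Prop :=
  ∀ (f : SolPos N) (i j : N), (∀ v, f.1 v i = f.1 v j) → ∀ v, Φ f v i = Φ f v j

/-- Equality for equal surplus (EES) for an operator on `F₊`. -/
def EES (Φ : SolPos N → GamePos N → N → ℝ) : Prop :=
  ∀ (f f' : SolPos N) (v : GamePos N) (i : N),
    (∑ k, f.1 v k) = (∑ k, f'.1 v k) → f.1 v i = f'.1 v i → Φ f v i = Φ f' v i

/-- The `f`-individualistic property for equal cohesive ratio (`f`-IECoR). -/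
def IECoR [Nonempty N] (f : SolPos N) (φ : GamePos N → N → ℝ) : Prop :=
  ∀ (v w : GamePos N) (i : N),
    cohesiveWorth v.1 / (∑ k, f.1 v k) = cohesiveWorth w.1 / (∑ k, f.1 w k) →
    f.1 v i = f.1 w i → φ v i = φ w i

section Aux

variable [Nonempty N]

theorem le_cohesiveWorth (v : Game N) (P : Finset (Finset N))
    (hP : IsPartition (Finset.univ : Finset N) P) :
    ∑ T ∈ P, v.1 T ≤ cohesiveWorth v := by
  unfold cohesiveWorth
  letI : DecidablePred (IsPartition (Finset.univ : Finset N)) := Classical.decPred _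
  exact Finset.le_sup' (fun P => ∑ T ∈ P, v.1 T)
    (Finset.mem_filter.mpr ⟨Finset.mem_univ _, hP⟩)

theorem cohesiveWorth_le (v : Game N) (c : ℝ)
    (h : ∀ P, IsPartition (Finset.univ : Finset N) P → ∑ T ∈ P, v.1 T ≤ c) :
    cohesiveWorth v ≤ c := by
  unfold cohesiveWorth
  letI : DecidablePred (IsPartition (Finset.univ : Finset N)) := Classical.decPred _
  exact Finset.sup'_le _ _ fun P hP => h P (Finset.mem_filter.mp hP).2

theorem isPartition_singletons :
    IsPartition (Finset.univ : Finset N)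
      (Finset.univ.image fun k => ({k} : Finset N)) := by
  refine ⟨?_, ?_, ?_⟩
  · intro C hC
    obtain ⟨k, -, rfl⟩ := Finset.mem_image.mp hC
    exact Finset.singleton_nonempty k
  · intro C hC C' hC' hne
    obtain ⟨k, -, rfl⟩ := Finset.mem_image.mp hC
    obtain ⟨k', -, rfl⟩ := Finset.mem_image.mp hC'
    simp only [Finset.disjoint_singleton]
    intro h; exact hne (by rw [h])
  · ext x
    simp [Finset.mem_biUnion]

theorem sum_singletons_le_cohesiveWorth (v : Game N) :
    ∑ k, v.1 {k} ≤ cohesiveWorth v := by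
  have := le_cohesiveWorth v _ isPartition_singletons
  rwa [Finset.sum_image (fun k _ k' _ h => Finset.singleton_injective h)] at this

theorem cohesiveWorth_pos (v : GamePos N) : 0 < cohesiveWorth v.1 :=
  lt_of_lt_of_le v.2 (sum_singletons_le_cohesiveWorth v.1)

/-- The additive game `S ↦ c * |S|`. -/
def scaleGame (c : ℝ) : Game N := ⟨fun S => c * S.card, by simp⟩

theorem sum_card_of_partition (P : Finset (Finset N))
    (hP : IsPartition (Finset.univ : Finset N) P) :
    ∑ T ∈ P, (T.card : ℝ) = (Fintype.card N : ℝ) := by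
  have h := Finset.card_biUnion (s := P) (t := id) hP.2.1
  rw [hP.2.2] at h
  rw [← Nat.cast_sum]
  simp only [Finset.card_univ] at h
  exact_mod_cast congrArg (Nat.cast (R := ℝ)) h.symm

theorem cohesiveWorth_scaleGame (c : ℝ) :
    cohesiveWorth (scaleGame c : Game N) = c * Fintype.card N := by
  apply le_antisymm
  · apply cohesiveWorth_le
    intro P hP
    have : ∑ T ∈ P, (scaleGame c : Game N).1 T = c * ∑ T ∈ P, (T.card : ℝ) := by
      rw [Finset.mul_sum]; rfl
    rw [this, sum_card_of_partition P hP]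
  · have := le_cohesiveWorth (scaleGame c) _ (isPartition_singleton (N := N))
    simpa [scaleGame] using this

theorem scaleGame_pos {c : ℝ} (hc : 0 < c) :
    0 < ∑ k, (scaleGame c : Game N).1 {k} := by
  have : ∑ k, (scaleGame c : Game N).1 {k} = (Fintype.card N : ℝ) * c := by
    simp [scaleGame, Finset.sum_const, mul_comm]
  rw [this]
  have : (0:ℝ) < (Fintype.card N : ℝ) := by
    exact_mod_cast Fintype.card_pos (α := N)
  positivity

/-- The constant positive solution. -/
def constSol {c : ℝ} (hc : 0 < c) : SolPos N :=
  ⟨fun _ _ => c, fun _ => by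
    have : (0:ℝ) < (Fintype.card N : ℝ) := by exact_mod_cast Fintype.card_pos
    simp only [Finset.sum_const, Finset.card_univ, nsmul_eq_mul]
    positivity⟩

/-- Combined use of EES and IECoR: the payoff to `i` depends only on the
cohesive ratio and on `i`'s own payoff value. -/
theorem combine {Φ : SolPos N → GamePos N → N → ℝ}
    (hEES : EES Φ) (hIE : ∀ f : SolPos N, IECoR f (Φ f))
    (f f' : SolPos N) (v w : GamePos N) (i : N)
    (hr : cohesiveWorth v.1 / (∑ k, f.1 v k) = cohesiveWorth w.1 / (∑ k, f'.1 w k))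
    (ht : f.1 v i = f'.1 w i) : Φ f v i = Φ f' w i := by
  by_cases hvw : v = w
  · subst hvw
    have hV := cohesiveWorth_pos v
    have hs1 := f.2 v
    have hs2 := f'.2 v
    have hs : (∑ k, f.1 v k) = ∑ k, f'.1 v k := by
      rw [div_eq_div_iff (ne_of_gt hs1) (ne_of_gt hs2)] at hr
      exact (mul_left_cancel₀ (ne_of_gt hV) hr).symm
    exact hEES f f' v i hs ht
  · have gpos : ∀ u, 0 < ∑ k, (fun u => if u = v then f.1 u else f'.1 u) u k := by
      intro u
      by_cases hu : u = v <;> simp [hu, f.2, f'.2]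
    set g : SolPos N := ⟨fun u => if u = v then f.1 u else f'.1 u, gpos⟩ with hg
    have hgv : g.1 v = f.1 v := by simp [hg]
    have hwv : w ≠ v := fun h => hvw h.symm
    have hgw : g.1 w = f'.1 w := by simp [hg, hwv]
    have h1 : Φ f v i = Φ g v i := hEES f g v i (by rw [hgv]) (by rw [hgv])
    have h2 : Φ g v i = Φ g w i := by
      refine hIE g v w i ?_ ?_
      · rw [hgv, hgw]; exact hr
      · rw [hgv, hgw]; exact ht
    have h3 : Φ g w i = Φ f' w i := hEES g f' w i (by rw [hgw]) (by rw [hgw])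
    rw [h1, h2, h3]

theorem constSol_val {Φ : SolPos N → GamePos N → N → ℝ}
    (hEff : ∀ (f : SolPos N) (v : GamePos N), ∑ i, Φ f v i = cohesiveWorth v.1)
    (hET : ET Φ) {c : ℝ} (hc : 0 < c) (w : GamePos N) (i : N) :
    Φ (constSol hc) w i = cohesiveWorth w.1 / Fintype.card N := by
  have hall : ∀ j, Φ (constSol hc) w j = Φ (constSol hc) w i := fun j =>
    hET (constSol hc) j i (fun _ => rfl) w
  have hsum := hEff (constSol hc) w
  rw [Finset.sum_congr rfl (fun j _ => hall j)] at hsum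
  rw [Finset.sum_const, Finset.card_univ, nsmul_eq_mul] at hsum
  have hn : (0:ℝ) < (Fintype.card N : ℝ) := by exact_mod_cast Fintype.card_pos
  field_simp
  rw [mul_comm]
  exact hsum

theorem pos_case {Φ : SolPos N → GamePos N → N → ℝ}
    (hEff : ∀ (f : SolPos N) (v : GamePos N), ∑ i, Φ f v i = cohesiveWorth v.1)
    (hET : ET Φ) (hEES : EES Φ) (hIE : ∀ f : SolPos N, IECoR f (Φ f))
    (f : SolPos N) (v : GamePos N) (i : N) (ht : 0 < f.1 v i) :
    Φ f v i = (f.1 v i / ∑ k, f.1 v k) * cohesiveWorth v.1 := by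
  set t := f.1 v i with htdef
  set s := ∑ k, f.1 v k with hsdef
  set V := cohesiveWorth v.1 with hVdef
  have hs : 0 < s := f.2 v
  have hV : 0 < V := cohesiveWorth_pos v
  have hn : (0:ℝ) < (Fintype.card N : ℝ) := by exact_mod_cast Fintype.card_pos
  have hc : 0 < V * t / s := by positivity
  set w : GamePos N := ⟨scaleGame (V * t / s), scaleGame_pos hc⟩ with hw
  have hW : cohesiveWorth w.1 = V * t / s * Fintype.card N := cohesiveWorth_scaleGame _
  have hsw : (∑ k, (constSol ht).1 w k) = (Fintype.card N : ℝ) * t := by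
    simp [constSol, Finset.sum_const, mul_comm]
  have key : Φ f v i = Φ (constSol ht) w i := by
    refine combine hEES hIE f (constSol ht) v w i ?_ rfl
    rw [hW, hsw, ← hsdef, ← hVdef]
    field_simp
  rw [key, constSol_val hEff hET ht w i, hW]
  field_simp

end Aux

/-- Corollary B.1(2): a cohesively efficient operator on `F₊` satisfies (ET),
(EES), and `Φ(f)` satisfies (`f`-IECoR) for every `f ∈ F₊`, iff `Φ` is the
cohesive proportional sharing operator. -/
theorem cohesive_ps_operator_characterization [Nonempty N]
    (Φ : SolPos N → GamePos N → N → ℝ)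
    (hEff : ∀ (f : SolPos N) (v : GamePos N), ∑ i, Φ f v i = cohesiveWorth v.1) :
    (ET Φ ∧ EES Φ ∧ ∀ f : SolPos N, IECoR f (Φ f)) ↔
      (∀ (f : SolPos N) (v : GamePos N) (i : N),
        Φ f v i = (f.1 v i / ∑ k, f.1 v k) * cohesiveWorth v.1) := by
  constructor
  · rintro ⟨hET, hEES, hIE⟩ f v i
    by_cases ht : 0 < f.1 v i
    · exact pos_case hEff hET hEES hIE f v i ht
    push_neg at ht
    set t := f.1 v i with htdef
    set s := ∑ k, f.1 v k with hsdef
    set V := cohesiveWorth v.1 with hVdef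
    have hs : 0 < s := f.2 v
    have hV : 0 < V := cohesiveWorth_pos v
    -- there must be at least two players
    have hn1 : 1 < Fintype.card N := by
      by_contra h
      push_neg at h
      have hp : 0 < Fintype.card N := Fintype.card_pos
      have h1 : Fintype.card N = 1 := by omega
      obtain ⟨x, hx⟩ := Fintype.card_eq_one_iff.mp h1
      have hall : ∀ k, f.1 v k = f.1 v i := fun k => by rw [hx k, hx i]
      have : s = t := by
        rw [hsdef, htdef, Finset.sum_congr rfl fun k _ => hall k,
          Finset.sum_const, Finset.card_univ, h1, one_smul]
      rw [this] at hs
      exact absurd hs (not_lt.mpr ht)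
    have hnR : (1:ℝ) < (Fintype.card N : ℝ) := by exact_mod_cast hn1
    have hne : ((Fintype.card N : ℝ) - 1) ≠ 0 := by linarith
    have hsne : s ≠ 0 := ne_of_gt hs
    set d : ℝ := (s - t) / ((Fintype.card N : ℝ) - 1) with hd
    have hdpos : 0 < d := by
      apply div_pos (by linarith) (by linarith)
    set b : N → ℝ := fun k => if k = i then t else d with hb
    have hcard_erase : ((Finset.univ.erase i).card : ℝ) = (Fintype.card N : ℝ) - 1 := by
      rw [Finset.card_erase_of_mem (Finset.mem_univ i), Finset.card_univ]
      have : 1 ≤ Fintype.card N := Fintype.card_pos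
      push_cast [Nat.cast_sub this]
      ring
    have hberase : ∑ k ∈ Finset.univ.erase i, b k = s - t := by
      have : ∀ k ∈ Finset.univ.erase i, b k = d := by
        intro k hk
        simp only [hb]
        rw [if_neg (Finset.ne_of_mem_erase hk)]
      rw [Finset.sum_congr rfl this, Finset.sum_const, nsmul_eq_mul, hcard_erase, hd]
      field_simp
    have hbsum : ∑ k, b k = s := by
      rw [← Finset.add_sum_erase _ _ (Finset.mem_univ i), hberase]
      simp [hb]
    have gpos : ∀ u, 0 < ∑ k, (fun u => if u = v then b else f.1 u) u k := by
      intro u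
      by_cases hu : u = v
      · subst hu; simpa [hbsum] using hs
      · simpa [hu] using f.2 u
    set g : SolPos N := ⟨fun u => if u = v then b else f.1 u, gpos⟩ with hg
    have hgv : g.1 v = b := by simp [hg]
    have h1 : Φ f v i = Φ g v i := by
      refine hEES f g v i ?_ ?_
      · rw [hgv, hbsum]
      · rw [hgv]; simp [hb]; rfl
    have hgsum : (∑ k, g.1 v k) = s := by rw [hgv, hbsum]
    have h2 : ∀ j, j ≠ i → Φ g v j = (d / s) * V := by
      intro j hj
      have hgj : g.1 v j = d := by rw [hgv]; simp [hb, hj]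
      have := pos_case hEff hET hEES hIE g v j (by rw [hgj]; exact hdpos)
      rwa [hgj, hgsum, ← hVdef] at this
    have hsum := hEff g v
    rw [← Finset.add_sum_erase _ _ (Finset.mem_univ i)] at hsum
    have herase : ∑ j ∈ Finset.univ.erase i, Φ g v j = ((s - t) / s) * V := by
      have : ∀ j ∈ Finset.univ.erase i, Φ g v j = (d / s) * V := fun j hj =>
        h2 j (Finset.ne_of_mem_erase hj)
      rw [Finset.sum_congr rfl this, Finset.sum_const, nsmul_eq_mul, hcard_erase, hd]
      field_simp
    rw [herase, ← hVdef] at hsum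
    have : Φ g v i = (t / s) * V := by
      have hsne : s ≠ 0 := ne_of_gt hs
      field_simp at hsum ⊢
      linarith
    rw [h1, this]
  · intro h
    refine ⟨?_, ?_, ?_⟩
    · intro f i j hij v
      rw [h, h, hij v]
    · intro f f' v i hsum hi
      rw [h, h, hsum, hi]
    · intro f v w i hr hi
      rw [h, h]
      rw [div_mul_eq_mul_div, mul_div_assoc, div_mul_eq_mul_div, mul_div_assoc,
        hr, hi]

end Stmt8
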